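/- Under the setup and Assumptions A4 and A5, assume additionally that Y = Y(1) almost surely on the event {A = 1, E = 1} (consistency for the treated) and that μ({A = 1, E = 1}) > 0. Then E[A·R·E·Y/η₁(L*)] = E[A·E·Y] and E[A·R·E/η₁(L*)] = μ({A = 1, E = 1}); consequently the mean outcome under treatment among the eligible treated is identified: E[Y(1) | {A = 1, E = 1}] = E[A·R·E·Y/η₁(L*)] / E[A·R·E/η₁(L*)], where the expectation on the left is under the conditional measure μ(·|{A = 1, E = 1}). -/

import Mathlib

open MeasureTheory ProbabilityTheory
open scoped ENNReal ProbabilityTheory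

set_option linter.unusedVariables false

/-- The sub-σ-algebra generated by the fully observed covariates and treatment. -/
def sigLA {Ω : Type*} {p : ℕ} (Lstar : Ω → Fin p → ℝ) (A : Ω → ℝ) : MeasurableSpace Ω :=
  MeasurableSpace.comap (fun ω => (Lstar ω, A ω)) inferInstance

/-- Identification of the treated-arm mean among the eligible treated, under MAR (A4),
missingness positivity (A5), and consistency for the treated. -/
theorem stmt_2
    {Ω : Type*} [𝓕 : MeasurableSpace Ω] [StandardBorelSpace Ω] [Nonempty Ω]
    (μ : Measure Ω) [IsProbabilityMeasure μ]
    {p q : ℕ}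
    (Lstar : Ω → Fin p → ℝ) (L : Ω → Fin q → ℝ) (A R Y : Ω → ℝ)
    (hLstar : Measurable Lstar) (hL : Measurable L)
    (hA : Measurable A) (hR : Measurable R) (hY : Measurable Y)
    (hA01 : ∀ ω, A ω = 0 ∨ A ω = 1) (hR01 : ∀ ω, R ω = 0 ∨ R ω = 1)
    (hY2 : MemLp Y 2 μ)
    (g : (Fin q → ℝ) → ℝ → ℝ) (hg : Measurable (Function.uncurry g))
    (hg01 : ∀ x a, g x a = 0 ∨ g x a = 1)
    -- Assumption A4 (MAR): R ⫫ (L, Y) | σ(L*, A)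
    (hMAR : CondIndepFun (MeasurableSpace.comap (fun ω => (Lstar ω, A ω)) inferInstance)
      ((hLstar.prodMk hA).comap_le) R (fun ω => (L ω, Y ω)) μ)
    -- Assumption A5 (missingness positivity)
    (η : (Fin p → ℝ) → ℝ → ℝ) (hη : Measurable (Function.uncurry η))
    (hηver : (fun ω => η (Lstar ω) (A ω)) =ᵐ[μ]
      μ[R|MeasurableSpace.comap (fun ω => (Lstar ω, A ω)) inferInstance])
    (ε₀ : ℝ) (hε₀ : 0 < ε₀)
    (hηpos : ∀ᵐ ω ∂μ, ε₀ ≤ η (Lstar ω) 0 ∧ ε₀ ≤ η (Lstar ω) 1)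
    -- consistency for the treated and positivity of the eligible-treated event
    (Y1 : Ω → ℝ) (hY1 : Integrable Y1 μ)
    (hcons : ∀ᵐ ω ∂μ, (A ω = 1 ∧ g (L ω) (A ω) = 1) → Y ω = Y1 ω)
    (hAE : 0 < μ {ω | A ω = 1 ∧ g (L ω) (A ω) = 1}) :
    (∫ ω, A ω * R ω * g (L ω) (A ω) * Y ω / η (Lstar ω) 1 ∂μ
        = ∫ ω, A ω * g (L ω) (A ω) * Y ω ∂μ) ∧
    (∫ ω, A ω * R ω * g (L ω) (A ω) / η (Lstar ω) 1 ∂μ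
        = (μ {ω | A ω = 1 ∧ g (L ω) (A ω) = 1}).toReal) ∧
    (∫ ω, Y1 ω ∂(μ[|{ω | A ω = 1 ∧ g (L ω) (A ω) = 1}])
        = (∫ ω, A ω * R ω * g (L ω) (A ω) * Y ω / η (Lstar ω) 1 ∂μ)
          / (∫ ω, A ω * R ω * g (L ω) (A ω) / η (Lstar ω) 1 ∂μ)) := by
  classical
  have hMAR' : CondIndepFun (sigLA Lstar A) ((hLstar.prodMk hA).comap_le) R
      (fun ω => (L ω, Y ω)) μ := hMAR
  have hηver' : (fun ω => η (Lstar ω) (A ω)) =ᵐ[μ] μ[R|sigLA Lstar A] := hηver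
  clear hMAR hηver
  have hm' : sigLA Lstar A ≤ 𝓕 := (hLstar.prodMk hA).comap_le
  have hpair : Measurable[(sigLA Lstar A)] (fun ω => (Lstar ω, A ω)) :=
    Measurable.of_comap_le le_rfl
  have hA'm : Measurable[(sigLA Lstar A)] A := measurable_snd.comp hpair
  have hη1 : Measurable fun x : Fin p → ℝ => η x 1 :=
    hη.comp (measurable_id.prodMk measurable_const)
  set c : Ω → ℝ := fun ω => A ω / η (Lstar ω) 1 with hcdef
  have hc'm : Measurable[(sigLA Lstar A)] c := by
    have h2 : Measurable fun x : (Fin p → ℝ) × ℝ => x.2 / η x.1 1 :=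
      measurable_snd.div (hη1.comp measurable_fst)
    exact h2.comp hpair
  have hc : Measurable[𝓕] c := hc'm.mono hm' le_rfl
  have hW : Measurable[𝓕] (fun ω => (L ω, Y ω)) := hL.prodMk hY
  have hA_nn : ∀ ω, 0 ≤ A ω := fun ω => by rcases hA01 ω with h | h <;> simp [h]
  have hR_nn : ∀ ω, 0 ≤ R ω := fun ω => by rcases hR01 ω with h | h <;> simp [h]
  have hA_bd : ∀ ω, ‖A ω‖ ≤ 1 := fun ω => by rcases hA01 ω with h | h <;> simp [h]
  have hR_bd : ∀ ω, ‖R ω‖ ≤ 1 := fun ω => by rcases hR01 ω with h | h <;> simp [h]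
  have hη1pos : ∀ᵐ ω ∂μ, 0 < η (Lstar ω) 1 :=
    hηpos.mono fun ω h => lt_of_lt_of_le hε₀ h.2
  have hc_nn : ∀ᵐ ω ∂μ, 0 ≤ c ω :=
    hη1pos.mono fun ω h => div_nonneg (hA_nn ω) h.le
  have hc_bd : ∀ᵐ ω ∂μ, ‖c ω‖ ≤ ε₀⁻¹ := by
    filter_upwards [hηpos] with ω h
    rcases hA01 ω with h0 | h1
    · simp [hcdef, h0, inv_nonneg.2 hε₀.le]
    · have hpos : 0 < η (Lstar ω) 1 := lt_of_lt_of_le hε₀ h.2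
      have : c ω = (η (Lstar ω) 1)⁻¹ := by simp [hcdef, h1, one_div]
      rw [this, Real.norm_eq_abs, abs_of_nonneg (inv_nonneg.2 hpos.le)]
      exact inv_anti₀ hε₀ h.2
  have hcη : ∀ᵐ ω ∂μ, c ω * η (Lstar ω) (A ω) = A ω := by
    filter_upwards [hη1pos] with ω h
    rcases hA01 ω with h0 | h1
    · simp [hcdef, h0]
    · simp only [hcdef, h1]
      field_simp
  -- the set where R = 1
  set s : Set Ω := R ⁻¹' {1} with hsdef
  have hs_meas : MeasurableSet[𝓕] s := hR (measurableSet_singleton 1)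
  have hR_ind : ∀ ω, R ω = s.indicator (fun _ => (1 : ℝ)) ω := by
    intro ω
    rcases hR01 ω with h | h <;>
      simp [Set.indicator_apply, hsdef, Set.mem_preimage, h]
  -- key identity on sets
  have key_set : ∀ t : Set ((Fin q → ℝ) × ℝ), MeasurableSet t →
      ∫ ω, R ω * c ω *
          ((fun ω => (L ω, Y ω)) ⁻¹' t).indicator (fun _ => (1 : ℝ)) ω ∂μ
        = ∫ ω, A ω *
          ((fun ω => (L ω, Y ω)) ⁻¹' t).indicator (fun _ => (1 : ℝ)) ω ∂μ := by
    intro t ht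
    set T : Set Ω := (fun ω => (L ω, Y ω)) ⁻¹' t with hTdef
    have hT : MeasurableSet[𝓕] T := hW ht
    have hsT : MeasurableSet[𝓕] (s ∩ T) := hs_meas.inter hT
    have hpt : ∀ ω, R ω * c ω * T.indicator (fun _ => (1 : ℝ)) ω
        = (c * (s ∩ T).indicator (fun _ => (1 : ℝ))) ω := by
      intro ω
      simp only [Pi.mul_apply, Set.indicator_apply, Set.mem_inter_iff]
      rcases hR01 ω with h | h <;> by_cases hωT : ω ∈ T <;>
        simp [hsdef, Set.mem_preimage, h, hωT]
    have hInd : Integrable ((s ∩ T).indicator (fun _ => (1 : ℝ))) μ :=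
      (integrable_const 1).indicator hsT
    have hIndT : Integrable (T.indicator (fun _ => (1 : ℝ))) μ :=
      (integrable_const 1).indicator hT
    have hind_bd : ∀ (u : Set Ω) ω, ‖u.indicator (fun _ => (1 : ℝ)) ω‖ ≤ 1 := by
      intro u ω; by_cases h : ω ∈ u <;> simp [Set.indicator_apply, h]
    have hcInd : Integrable (c * (s ∩ T).indicator (fun _ => (1 : ℝ))) μ := by
      refine ⟨(hc.aestronglyMeasurable.mul hInd.1), ?_⟩
      apply HasFiniteIntegral.of_bounded (C := ε₀⁻¹)
      filter_upwards [hc_bd] with ω hb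
      calc ‖(c * (s ∩ T).indicator (fun _ => (1 : ℝ))) ω‖
          = ‖c ω‖ * ‖(s ∩ T).indicator (fun _ => (1 : ℝ)) ω‖ := by
            simp [Pi.mul_apply, norm_mul]
        _ ≤ ε₀⁻¹ * 1 :=
            mul_le_mul hb (hind_bd _ ω) (norm_nonneg _) (inv_nonneg.2 hε₀.le)
        _ = ε₀⁻¹ := mul_one _
    have hAInd : Integrable (A * T.indicator (fun _ => (1 : ℝ))) μ := by
      refine ⟨(hA.aestronglyMeasurable.mul hIndT.1), ?_⟩
      apply HasFiniteIntegral.of_bounded (C := 1)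
      refine Filter.Eventually.of_forall fun ω => ?_
      calc ‖(A * T.indicator (fun _ => (1 : ℝ))) ω‖
          = ‖A ω‖ * ‖T.indicator (fun _ => (1 : ℝ)) ω‖ := by
            simp [Pi.mul_apply, norm_mul]
        _ ≤ 1 * 1 := mul_le_mul (hA_bd ω) (hind_bd _ ω) (norm_nonneg _) zero_le_one
        _ = 1 := mul_one _
    have hmul1 : μ[c * (s ∩ T).indicator (fun _ => (1 : ℝ))|(sigLA Lstar A)]
        =ᵐ[μ] c * μ[(s ∩ T).indicator (fun _ => (1 : ℝ))|(sigLA Lstar A)] :=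
      condExp_mul_of_stronglyMeasurable_left hc'm.stronglyMeasurable hcInd hInd
    have hmul2 : μ[A * T.indicator (fun _ => (1 : ℝ))|(sigLA Lstar A)]
        =ᵐ[μ] A * μ[T.indicator (fun _ => (1 : ℝ))|(sigLA Lstar A)] :=
      condExp_mul_of_stronglyMeasurable_left hA'm.stronglyMeasurable hAInd hIndT
    have hfac := (condIndepFun_iff_condExp_inter_preimage_eq_mul
      (hm' := hm') hR hW).mp hMAR' {1} t (measurableSet_singleton 1) ht
    rw [← hsdef, ← hTdef] at hfac
    have hs_eq : μ[s.indicator (fun _ => (1 : ℝ))|(sigLA Lstar A)] = μ[R|(sigLA Lstar A)] := by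
      have hfe : s.indicator (fun _ => (1 : ℝ)) = R := funext fun ω => (hR_ind ω).symm
      rw [hfe]
    have hmid : (c * μ[(s ∩ T).indicator (fun _ => (1 : ℝ))|(sigLA Lstar A)])
        =ᵐ[μ] fun ω => A ω * (μ[T.indicator (fun _ => (1 : ℝ))|(sigLA Lstar A)]) ω := by
      filter_upwards [hfac, hηver', hcη] with ω h1 h2 h3
      simp only [Pi.mul_apply]
      rw [h1, hs_eq, ← h2, ← mul_assoc, h3]
    calc ∫ ω, R ω * c ω * T.indicator (fun _ => (1 : ℝ)) ω ∂μ
        = ∫ ω, (c * (s ∩ T).indicator (fun _ => (1 : ℝ))) ω ∂μ :=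
          integral_congr_ae (Filter.Eventually.of_forall hpt)
      _ = ∫ ω, (μ[c * (s ∩ T).indicator (fun _ => (1 : ℝ))|(sigLA Lstar A)]) ω ∂μ :=
          (integral_condExp hm').symm
      _ = ∫ ω, (c * μ[(s ∩ T).indicator (fun _ => (1 : ℝ))|(sigLA Lstar A)]) ω ∂μ :=
          integral_congr_ae hmul1
      _ = ∫ ω, A ω * (μ[T.indicator (fun _ => (1 : ℝ))|(sigLA Lstar A)]) ω ∂μ :=
          integral_congr_ae hmid
      _ = ∫ ω, (μ[A * T.indicator (fun _ => (1 : ℝ))|(sigLA Lstar A)]) ω ∂μ :=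
          (integral_congr_ae hmul2).symm
      _ = ∫ ω, (A * T.indicator (fun _ => (1 : ℝ))) ω ∂μ :=
          integral_condExp hm'
      _ = ∫ ω, A ω * T.indicator (fun _ => (1 : ℝ)) ω ∂μ := rfl
  -- integrability of R * c and A
  have hRc_int : Integrable (fun ω => R ω * c ω) μ := by
    refine ⟨((hR.mul hc).aestronglyMeasurable), ?_⟩
    apply HasFiniteIntegral.of_bounded (C := ε₀⁻¹)
    filter_upwards [hc_bd] with ω hb
    calc ‖R ω * c ω‖ = ‖R ω‖ * ‖c ω‖ := norm_mul _ _
      _ ≤ 1 * ε₀⁻¹ := mul_le_mul (hR_bd ω) hb (norm_nonneg _) zero_le_one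
      _ = ε₀⁻¹ := one_mul _
  have hA_int : Integrable A μ := by
    refine ⟨hA.aestronglyMeasurable, ?_⟩
    exact HasFiniteIntegral.of_bounded (Filter.Eventually.of_forall hA_bd)
  have hRc_nn : ∀ᵐ ω ∂μ, 0 ≤ R ω * c ω :=
    hc_nn.mono fun ω h => mul_nonneg (hR_nn ω) h
  -- the two pushforward measures agree
  have hd1 : Measurable[𝓕] fun ω => (R ω * c ω).toNNReal := (hR.mul hc).real_toNNReal
  have hd2 : Measurable[𝓕] fun ω => (A ω).toNNReal := hA.real_toNNReal
  have hν : Measure.map (fun ω => (L ω, Y ω))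
        (μ.withDensity fun ω => ((R ω * c ω).toNNReal : ℝ≥0∞))
      = Measure.map (fun ω => (L ω, Y ω))
        (μ.withDensity fun ω => ((A ω).toNNReal : ℝ≥0∞)) := by
    ext t ht
    rw [Measure.map_apply hW ht, Measure.map_apply hW ht,
      withDensity_apply _ (hW ht), withDensity_apply _ (hW ht)]
    set T : Set Ω := (fun ω => (L ω, Y ω)) ⁻¹' t with hTdef
    have hT : MeasurableSet[𝓕] T := hW ht
    have hindmul : ∀ (f : Ω → ℝ),
        (fun ω => f ω * T.indicator (fun _ => (1 : ℝ)) ω) = T.indicator f := by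
      intro f; funext ω; by_cases h : ω ∈ T <;> simp [Set.indicator_apply, h]
    have e2 : ∫ ω in T, R ω * c ω ∂μ = ∫ ω in T, A ω ∂μ := by
      have h := key_set t ht
      rw [← hTdef] at h
      rw [← integral_indicator hT, ← integral_indicator hT,
        ← hindmul (fun ω => R ω * c ω), ← hindmul A]
      simpa using h
    have e1 : ∫⁻ ω in T, ((R ω * c ω).toNNReal : ℝ≥0∞) ∂μ
        = ENNReal.ofReal (∫ ω in T, R ω * c ω ∂μ) :=
      (ofReal_integral_eq_lintegral_ofReal (hRc_int.restrict)
        (ae_restrict_of_ae hRc_nn)).symm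
    have e3 : ∫⁻ ω in T, ((A ω).toNNReal : ℝ≥0∞) ∂μ
        = ENNReal.ofReal (∫ ω in T, A ω ∂μ) :=
      (ofReal_integral_eq_lintegral_ofReal (hA_int.restrict)
        (ae_restrict_of_ae (Filter.Eventually.of_forall hA_nn))).symm
    rw [e1, e3, e2]
  -- key identity for functions of (L, Y)
  have key_fun : ∀ ψ : ((Fin q → ℝ) × ℝ) → ℝ, Measurable ψ →
      Integrable (fun ω => ψ (L ω, Y ω)) μ →
      ∫ ω, R ω * c ω * ψ (L ω, Y ω) ∂μ = ∫ ω, A ω * ψ (L ω, Y ω) ∂μ := by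
    intro ψ hψ hψint
    have h1 : ∫ x, ψ x ∂(Measure.map (fun ω => (L ω, Y ω))
          (μ.withDensity fun ω => ((R ω * c ω).toNNReal : ℝ≥0∞)))
        = ∫ x, ψ x ∂(Measure.map (fun ω => (L ω, Y ω))
          (μ.withDensity fun ω => ((A ω).toNNReal : ℝ≥0∞))) := by rw [hν]
    rw [integral_map hW.aemeasurable hψ.aestronglyMeasurable,
      integral_map hW.aemeasurable hψ.aestronglyMeasurable,
      integral_withDensity_eq_integral_smul hd1,
      integral_withDensity_eq_integral_smul hd2] at h1
    have c1 : (fun ω => (R ω * c ω).toNNReal • ψ (L ω, Y ω))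
        =ᵐ[μ] fun ω => R ω * c ω * ψ (L ω, Y ω) := by
      filter_upwards [hRc_nn] with ω h
      rw [NNReal.smul_def, Real.coe_toNNReal _ h, smul_eq_mul]
    have c2 : (fun ω => (A ω).toNNReal • ψ (L ω, Y ω))
        =ᵐ[μ] fun ω => A ω * ψ (L ω, Y ω) := by
      refine Filter.Eventually.of_forall fun ω => ?_
      show (A ω).toNNReal • ψ (L ω, Y ω) = A ω * ψ (L ω, Y ω)
      rw [NNReal.smul_def, Real.coe_toNNReal _ (hA_nn ω), smul_eq_mul]
    rw [integral_congr_ae c1, integral_congr_ae c2] at h1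
    exact h1
  -- first claim
  have hYint : Integrable Y μ := hY2.integrable one_le_two
  have hg1_bd : ∀ x, ‖g x (1:ℝ)‖ ≤ 1 := fun x => by
    rcases hg01 x 1 with h | h <;> simp [h]
  have hψ1 : Measurable fun x : (Fin q → ℝ) × ℝ => g x.1 1 * x.2 :=
    (hg.comp (measurable_fst.prodMk measurable_const)).mul measurable_snd
  have hψ1int : Integrable (fun ω => g (L ω) 1 * Y ω) μ := by
    refine hYint.abs.mono' ((hg.comp (hL.prodMk measurable_const)).mul hY).aestronglyMeasurable ?_
    refine Filter.Eventually.of_forall fun ω => ?_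
    calc ‖g (L ω) 1 * Y ω‖ = ‖g (L ω) 1‖ * ‖Y ω‖ := norm_mul _ _
      _ ≤ 1 * ‖Y ω‖ := mul_le_mul_of_nonneg_right (hg1_bd _) (norm_nonneg _)
      _ = |Y ω| := by rw [one_mul, Real.norm_eq_abs]
  have claim1 : ∫ ω, A ω * R ω * g (L ω) (A ω) * Y ω / η (Lstar ω) 1 ∂μ
      = ∫ ω, A ω * g (L ω) (A ω) * Y ω ∂μ := by
    have pt1 : ∀ ω, A ω * R ω * g (L ω) (A ω) * Y ω / η (Lstar ω) 1
        = R ω * c ω * (g (L ω) 1 * Y ω) := by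
      intro ω
      rcases hA01 ω with h | h <;> simp [hcdef, h, div_eq_mul_inv] <;> ring
    have pt2 : ∀ ω, A ω * g (L ω) (A ω) * Y ω = A ω * (g (L ω) 1 * Y ω) := by
      intro ω
      rcases hA01 ω with h | h <;> simp [h] <;> ring
    rw [integral_congr_ae (Filter.Eventually.of_forall pt1),
      integral_congr_ae (Filter.Eventually.of_forall pt2)]
    exact key_fun _ hψ1 hψ1int
  -- the eligible-treated event as an indicator
  set S : Set Ω := {ω | A ω = 1 ∧ g (L ω) (A ω) = 1} with hSdef
  have hG : Measurable[𝓕] fun ω => g (L ω) (A ω) := hg.comp (hL.prodMk hA)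
  have hS_meas : MeasurableSet[𝓕] S := by
    have : S = A ⁻¹' {1} ∩ (fun ω => g (L ω) (A ω)) ⁻¹' {1} := by
      ext ω; simp [hSdef]
    rw [this]
    exact (hA (measurableSet_singleton 1)).inter (hG (measurableSet_singleton 1))
  have hAg_ind : ∀ ω, A ω * g (L ω) (A ω) = S.indicator (fun _ => (1 : ℝ)) ω := by
    intro ω
    rcases hA01 ω with h | h
    · simp [Set.indicator_apply, hSdef, h]
    · rcases hg01 (L ω) 1 with h' | h' <;> simp [Set.indicator_apply, hSdef, h, h']
  -- second claim
  have claim2 : ∫ ω, A ω * R ω * g (L ω) (A ω) / η (Lstar ω) 1 ∂μ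
      = (μ S).toReal := by
    have hψ2 : Measurable fun x : (Fin q → ℝ) × ℝ => g x.1 1 :=
      hg.comp (measurable_fst.prodMk measurable_const)
    have hψ2int : Integrable (fun ω => g (L ω) 1) μ := by
      refine ⟨(hg.comp (hL.prodMk measurable_const)).aestronglyMeasurable, ?_⟩
      exact HasFiniteIntegral.of_bounded
        (Filter.Eventually.of_forall fun ω => hg1_bd (L ω))
    have pt1 : ∀ ω, A ω * R ω * g (L ω) (A ω) / η (Lstar ω) 1
        = R ω * c ω * g (L ω) 1 := by
      intro ω
      rcases hA01 ω with h | h <;> simp [hcdef, h, div_eq_mul_inv] <;> ring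
    have pt2 : ∀ ω, A ω * g (L ω) 1 = S.indicator (fun _ => (1 : ℝ)) ω := by
      intro ω
      rcases hA01 ω with h | h
      · simp [Set.indicator_apply, hSdef, h]
      · rw [← hAg_ind ω, h]
    rw [integral_congr_ae (Filter.Eventually.of_forall pt1),
      key_fun _ hψ2 hψ2int,
      integral_congr_ae (Filter.Eventually.of_forall pt2),
      integral_indicator_const (1 : ℝ) hS_meas]
    simp [Measure.real]
  refine ⟨claim1, claim2, ?_⟩
  -- third claim
  have hμS_ne : μ S ≠ 0 := hAE.ne'
  have hμS_fin : μ S ≠ ∞ := measure_ne_top μ S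
  have hSint : ∫ ω in S, Y1 ω ∂μ = ∫ ω, A ω * g (L ω) (A ω) * Y ω ∂μ := by
    have h1 : ∫ ω in S, Y1 ω ∂μ = ∫ ω in S, Y ω ∂μ := by
      refine integral_congr_ae ?_
      filter_upwards [ae_restrict_of_ae hcons, ae_restrict_mem hS_meas] with ω h1 h2
      exact (h1 h2).symm
    have h2 : ∀ ω, A ω * g (L ω) (A ω) * Y ω = S.indicator Y ω := by
      intro ω
      rw [hAg_ind ω]
      by_cases h : ω ∈ S <;> simp [Set.indicator_apply, h]
    rw [h1, ← integral_indicator hS_meas]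
    exact (integral_congr_ae (Filter.Eventually.of_forall h2)).symm
  rw [claim1, claim2]
  show ∫ ω, Y1 ω ∂((μ S)⁻¹ • μ.restrict S) = _
  rw [integral_smul_measure, hSint, ENNReal.toReal_inv, smul_eq_mul]
  rw [div_eq_inv_mul]
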